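/- Let $\{F_n\}$, $\{G_n\}$, $\{H_n\}$ be sequences of functions on $\{0,\dots,n\}$ with $F_n(k)=G_n(k)+H_n(k)F_n(k+1)$ and $F_n(n)=\mu$. Define $f_n(x)=F_n(\lfloor nx\rfloor)$, $h_n(x)=n(1-H_n(\lfloor nx\rfloor))$, $g_n(x)=nG_n(\lfloor nx\rfloor)$. If $h_n\to h$ and $g_n\to g$ uniformly on every $[\varepsilon,\varepsilon']\subset(0,1)$ with $h,g$ continuous, and $f_n\to f$ uniformly on $[0,1]$ with $f$ continuous, then $f(1)=\mu$ and $f$ is differentiable on $(0,1)$ with $f'=fh-g$. -/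

import Mathlib

open Filter Topology Set MeasureTheory

lemma aux_const_on_Ico {ψ : ℝ → ℝ} {a b c : ℝ} (hab : a ≤ b)
    (hc : ∀ t ∈ Set.Ico a b, ψ t = c) :
    IntervalIntegrable ψ volume a b ∧ (∫ t in a..b, ψ t) = c * (b - a) := by
  have hb : ∀ᵐ t : ℝ, t ≠ b := by
    have : (volume : Measure ℝ) {b} = 0 := measure_singleton b
    exact compl_mem_ae_iff.mpr this
  have hae : ∀ᵐ t : ℝ, t ∈ Set.uIoc a b → ψ t = c := by
    filter_upwards [hb] with t htb ht
    rw [Set.uIoc_of_le hab] at ht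
    exact hc t ⟨ht.1.le, lt_of_le_of_ne ht.2 htb⟩
  constructor
  · rw [intervalIntegrable_iff]
    have hconst : IntegrableOn (fun _ : ℝ => c) (Set.uIoc a b) volume := by
      exact integrableOn_const (by rw [Set.uIoc_of_le hab]; exact measure_Ioc_lt_top.ne)
    exact hconst.congr ((ae_restrict_iff' measurableSet_uIoc).mpr (by
      filter_upwards [hae] with t ht h't using (ht h't).symm))
  · rw [intervalIntegral.integral_congr_ae hae, intervalIntegral.integral_const,
      smul_eq_mul, mul_comm]

lemma aux_floor_eq {n j : ℕ} (hn : 0 < n) {t : ℝ} (h1 : (j:ℝ)/n ≤ t) (h2 : t < ((j:ℝ)+1)/n) :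
    ⌊(n:ℝ)*t⌋₊ = j := by
  have hn' : (0:ℝ) < n := by exact_mod_cast hn
  have ht0 : 0 ≤ t := le_trans (by positivity) h1
  rw [Nat.floor_eq_iff (by positivity)]
  constructor
  · rw [div_le_iff₀ hn'] at h1; linarith [h1]
  · rw [lt_div_iff₀ hn'] at h2; linarith [h2]

noncomputable def psiFn (F G H : ℕ → ℕ → ℝ) (n : ℕ) (t : ℝ) : ℝ :=
  (n:ℝ) * ((1 - H n ⌊(n:ℝ)*t⌋₊) * F n (⌊(n:ℝ)*t⌋₊ + 1) - G n ⌊(n:ℝ)*t⌋₊)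

lemma aux_piece (F G H : ℕ → ℕ → ℝ)
    (hrec : ∀ n : ℕ, ∀ k < n, F n k = G n k + H n k * F n (k + 1))
    {n j : ℕ} (hj : j < n) :
    IntervalIntegrable (psiFn F G H n) volume ((j:ℝ)/n) (((j:ℝ)+1)/n) ∧
    (∫ t in ((j:ℝ)/n)..(((j:ℝ)+1)/n), psiFn F G H n t) = F n (j+1) - F n j := by
  have hn : 0 < n := lt_of_le_of_lt (Nat.zero_le j) hj
  have hn' : (0:ℝ) < n := by exact_mod_cast hn
  have hab : (j:ℝ)/n ≤ ((j:ℝ)+1)/n := by gcongr; linarith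
  set c : ℝ := (n:ℝ) * ((1 - H n j) * F n (j + 1) - G n j) with hcdef
  have hc : ∀ t ∈ Set.Ico ((j:ℝ)/n) (((j:ℝ)+1)/n), psiFn F G H n t = c := by
    intro t ht
    rw [psiFn, aux_floor_eq hn ht.1 ht.2]
  obtain ⟨hint, hval⟩ := aux_const_on_Ico hab hc
  refine ⟨hint, ?_⟩
  rw [hval, hcdef, hrec n j hj]
  field_simp
  ring

lemma aux_telescope (F G H : ℕ → ℕ → ℝ)
    (hrec : ∀ n : ℕ, ∀ k < n, F n k = G n k + H n k * F n (k + 1))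
    {n : ℕ} (k m : ℕ) (hkm : k ≤ m) (hmn : m ≤ n) :
    IntervalIntegrable (psiFn F G H n) volume ((k:ℝ)/n) ((m:ℝ)/n) ∧
    F n m - F n k = ∫ t in ((k:ℝ)/n)..((m:ℝ)/n), psiFn F G H n t := by
  induction m, hkm using Nat.le_induction with
  | base => simp [IntervalIntegrable.refl]
  | succ m hkm ih =>
    have hmn' : m < n := hmn
    obtain ⟨ih1, ih2⟩ := ih hmn'.le
    obtain ⟨p1, p2⟩ := aux_piece F G H hrec hmn'
    have hcast : ((m+1 : ℕ) : ℝ)/(n:ℝ) = ((m:ℝ)+1)/n := by push_cast; ring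
    refine ⟨?_, ?_⟩
    · rw [hcast]; exact ih1.trans p1
    · rw [hcast, ← intervalIntegral.integral_add_adjacent_intervals ih1 p1, ← ih2, p2]
      ring

lemma aux_TUO_mul {ι : Type*} {l : Filter ι} {s : Set ℝ} {f1 f2 : ι → ℝ → ℝ} {g1 g2 : ℝ → ℝ}
    {B : ℝ} (hB : 0 ≤ B)
    (h1 : TendstoUniformlyOn f1 g1 l s) (h2 : TendstoUniformlyOn f2 g2 l s)
    (hb1 : ∀ x ∈ s, |g1 x| ≤ B) (hb2 : ∀ x ∈ s, |g2 x| ≤ B) :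
    TendstoUniformlyOn (fun i x => f1 i x * f2 i x) (fun x => g1 x * g2 x) l s := by
  rw [Metric.tendstoUniformlyOn_iff] at h1 h2 ⊢
  intro δ hδ
  have hden : (0:ℝ) < 2*B+2 := by linarith
  set η := min 1 (δ / (2*B+2)) with hηdef
  have hηpos : 0 < η := lt_min one_pos (div_pos hδ hden)
  have hη1 : η ≤ 1 := min_le_left _ _
  have hη2 : η ≤ δ / (2*B+2) := min_le_right _ _
  filter_upwards [h1 η hηpos, h2 η hηpos] with i hi1 hi2 x hx
  have e1 : |g1 x - f1 i x| < η := by rw [← Real.dist_eq]; exact hi1 x hx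
  have e2 : |g2 x - f2 i x| < η := by rw [← Real.dist_eq]; exact hi2 x hx
  have hf2 : |f2 i x| ≤ B + η := by
    have := abs_sub_abs_le_abs_sub (f2 i x) (g2 x)
    rw [abs_sub_comm] at this
    linarith [hb2 x hx]
  rw [Real.dist_eq]
  have key : |g1 x * g2 x - f1 i x * f2 i x| ≤ |g1 x| * |g2 x - f2 i x| + |g1 x - f1 i x| * |f2 i x| := by
    have h' : g1 x * g2 x - f1 i x * f2 i x
        = g1 x * (g2 x - f2 i x) + (g1 x - f1 i x) * f2 i x := by ring
    rw [h']
    calc |g1 x * (g2 x - f2 i x) + (g1 x - f1 i x) * f2 i x|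
        ≤ |g1 x * (g2 x - f2 i x)| + |(g1 x - f1 i x) * f2 i x| := abs_add_le _ _
      _ = |g1 x| * |g2 x - f2 i x| + |g1 x - f1 i x| * |f2 i x| := by rw [abs_mul, abs_mul]
  have hg1 := hb1 x hx
  have hab1 : (0:ℝ) ≤ |g1 x| := abs_nonneg _
  have hab2 : (0:ℝ) ≤ |g1 x - f1 i x| := abs_nonneg _
  have step : |g1 x| * |g2 x - f2 i x| + |g1 x - f1 i x| * |f2 i x| ≤ B * η + η * (B + η) := by
    have t1 : |g1 x| * |g2 x - f2 i x| ≤ B * η :=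
      mul_le_mul hg1 e2.le (abs_nonneg _) hB
    have t2 : |g1 x - f1 i x| * |f2 i x| ≤ η * (B + η) :=
      mul_le_mul e1.le hf2 (abs_nonneg _) hηpos.le
    linarith
  have final : B * η + η * (B + η) < δ := by
    have hlt : η * (2*B + 2) ≤ δ := by
      rw [← le_div_iff₀ hden]; exact hη2
    nlinarith
  linarith

lemma aux_key (F G H : ℕ → ℕ → ℝ) (f g h : ℝ → ℝ)
    (hrec : ∀ n : ℕ, ∀ k < n, F n k = G n k + H n k * F n (k + 1))
    (hgconv : ∀ ε ε' : ℝ, 0 < ε → ε < ε' → ε' < 1 →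
      TendstoUniformlyOn (fun (n : ℕ) (x : ℝ) => (n : ℝ) * G n ⌊(n : ℝ) * x⌋₊) g atTop (Set.Icc ε ε'))
    (hhconv : ∀ ε ε' : ℝ, 0 < ε → ε < ε' → ε' < 1 →
      TendstoUniformlyOn (fun (n : ℕ) (x : ℝ) => (n : ℝ) * (1 - H n ⌊(n : ℝ) * x⌋₊)) h atTop
        (Set.Icc ε ε'))
    (hg : ContinuousOn g (Set.Ioo 0 1)) (hh : ContinuousOn h (Set.Ioo 0 1))
    (hfconv : TendstoUniformlyOn (fun (n : ℕ) (x : ℝ) => F n ⌊(n : ℝ) * x⌋₊) f atTop (Set.Icc 0 1))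
    (hf : ContinuousOn f (Set.Icc 0 1))
    {x y : ℝ} (hx : 0 < x) (hxy : x < y) (hy1 : y < 1) :
    f y - f x = ∫ t in x..y, (h t * f t - g t) := by
  set ε : ℝ := x/2 with hεdef
  set ε' : ℝ := (1+y)/2 with hε'def
  have hε : 0 < ε := by rw [hεdef]; linarith
  have hεx : ε < x := by rw [hεdef]; linarith
  have hyε' : y < ε' := by rw [hε'def]; linarith
  have hε'1 : ε' < 1 := by rw [hε'def]; linarith
  have hεε' : ε < ε' := by linarith
  have hsub1 : Set.Icc ε ε' ⊆ Set.Ioo (0:ℝ) 1 := fun t ht =>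
    ⟨lt_of_lt_of_le hε ht.1, lt_of_le_of_lt ht.2 hε'1⟩
  have hsub0 : Set.Icc ε ε' ⊆ Set.Icc (0:ℝ) 1 := hsub1.trans Set.Ioo_subset_Icc_self
  set φ : ℝ → ℝ := fun t => h t * f t - g t with hφdef
  have hφc : ContinuousOn φ (Set.Icc ε ε') :=
    ((hh.mono hsub1).mul (hf.mono hsub0)).sub (hg.mono hsub1)
  -- uniform convergence of the shifted sequence
  have Ufs : TendstoUniformlyOn (fun (n:ℕ) (t:ℝ) => F n (⌊(n:ℝ)*t⌋₊ + 1)) f atTop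
      (Set.Icc ε ε') := by
    rw [Metric.tendstoUniformlyOn_iff]
    intro δ hδ
    have hfu : UniformContinuousOn f (Set.Icc 0 1) :=
      isCompact_Icc.uniformContinuousOn_of_continuous hf
    rw [Metric.uniformContinuousOn_iff] at hfu
    obtain ⟨η, hηpos, hfu⟩ := hfu (δ/2) (by linarith)
    have hconv := (Metric.tendstoUniformlyOn_iff.mp hfconv) (δ/2) (by linarith)
    have hevη : ∀ᶠ n : ℕ in atTop, 1/(n:ℝ) < η :=
      tendsto_one_div_atTop_nhds_zero_nat.eventually_lt_const hηpos
    have hevε' : ∀ᶠ n : ℕ in atTop, 1/(n:ℝ) < 1 - ε' :=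
      tendsto_one_div_atTop_nhds_zero_nat.eventually_lt_const (by linarith)
    filter_upwards [hconv, hevη, hevε', eventually_gt_atTop 0] with n hn hn1 hn2 hn3 t ht
    have hnpos : (0:ℝ) < n := by exact_mod_cast hn3
    have ht01 : t ∈ Set.Icc (0:ℝ) 1 := hsub0 ht
    have ht0 : 0 ≤ t := ht01.1
    have hshift : t + 1/(n:ℝ) ∈ Set.Icc (0:ℝ) 1 := by
      constructor
      · positivity
      · have := ht.2; linarith
    have hfl : ⌊(n:ℝ)*(t + 1/(n:ℝ))⌋₊ = ⌊(n:ℝ)*t⌋₊ + 1 := by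
      rw [mul_add, mul_one_div, div_self (ne_of_gt hnpos),
        Nat.floor_add_one (mul_nonneg hnpos.le ht0)]
    have d1 : dist (f (t+1/(n:ℝ))) (F n ⌊(n:ℝ)*(t+1/(n:ℝ))⌋₊) < δ/2 := hn _ hshift
    rw [hfl] at d1
    have d2 : dist (f t) (f (t + 1/(n:ℝ))) < δ/2 := by
      apply hfu t ht01 _ hshift
      rw [Real.dist_eq]
      have he : t - (t+1/(n:ℝ)) = -(1/(n:ℝ)) := by ring
      rw [he, abs_neg, abs_of_pos (by positivity)]
      exact hn1
    calc dist (f t) (F n (⌊(n:ℝ)*t⌋₊ + 1))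
        ≤ dist (f t) (f (t+1/(n:ℝ))) + dist (f (t+1/(n:ℝ))) (F n (⌊(n:ℝ)*t⌋₊ + 1)) :=
          dist_triangle _ _ _
      _ < δ/2 + δ/2 := add_lt_add d2 d1
      _ = δ := by ring
  -- bounds on h and f
  obtain ⟨Bh, hBh⟩ := isCompact_Icc.exists_bound_of_continuousOn (hh.mono hsub1)
  obtain ⟨Bf, hBf⟩ := isCompact_Icc.exists_bound_of_continuousOn (hf.mono hsub0)
  set B : ℝ := max (max Bh Bf) 0 with hBdef
  have hB0 : 0 ≤ B := le_max_right _ _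
  have hb1 : ∀ t ∈ Set.Icc ε ε', |h t| ≤ B := fun t ht => by
    have := hBh t ht
    rw [Real.norm_eq_abs] at this
    exact le_trans this (le_trans (le_max_left _ _) (le_max_left _ _))
  have hb2 : ∀ t ∈ Set.Icc ε ε', |f t| ≤ B := fun t ht => by
    have := hBf t ht
    rw [Real.norm_eq_abs] at this
    exact le_trans this (le_trans (le_max_right _ _) (le_max_left _ _))
  have Uh := hhconv ε ε' hε hεε' hε'1
  have Ug := hgconv ε ε' hε hεε' hε'1
  have Uprod := aux_TUO_mul hB0 Uh Ufs hb1 hb2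
  have Upsi : TendstoUniformlyOn (fun n => psiFn F G H n) φ atTop (Set.Icc ε ε') := by
    have hsub' := Uprod.sub Ug
    have hlim : ((fun t => h t * f t) - g) = φ := by funext t; simp [hφdef]
    rw [hlim] at hsub'
    apply hsub'.congr
    filter_upwards with n t ht
    simp only [Pi.sub_apply, psiFn]
    ring
  -- the discretized endpoints
  set kx : ℕ → ℕ := fun n => ⌊(n:ℝ)*x⌋₊ with hkxdef
  set ky : ℕ → ℕ := fun n => ⌊(n:ℝ)*y⌋₊ with hkydef
  set a : ℕ → ℝ := fun n => (kx n : ℝ)/n with hadef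
  set b : ℕ → ℝ := fun n => (ky n : ℝ)/n with hbdef
  have hev : ∀ᶠ n : ℕ in atTop, 1/(n:ℝ) < x - ε ∧ 0 < n := by
    filter_upwards [tendsto_one_div_atTop_nhds_zero_nat.eventually_lt_const
      (by linarith : (0:ℝ) < x - ε), eventually_gt_atTop 0] with n h1 h2
    exact ⟨h1, h2⟩
  have hfacts : ∀ n : ℕ, 1/(n:ℝ) < x - ε → 0 < n →
      x - 1/(n:ℝ) ≤ a n ∧ ε < a n ∧ a n ≤ x ∧ a n ≤ b n ∧ y - 1/(n:ℝ) ≤ b n ∧ b n ≤ y ∧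
        ky n ≤ n ∧ kx n ≤ ky n := by
    intro n h1 h2
    have hnpos : (0:ℝ) < n := by exact_mod_cast h2
    have hltx : (n:ℝ)*x - 1 < (kx n : ℝ) := by
      have := Nat.lt_floor_add_one ((n:ℝ)*x)
      simp only [hkxdef] at *
      linarith
    have hlty : (n:ℝ)*y - 1 < (ky n : ℝ) := by
      have := Nat.lt_floor_add_one ((n:ℝ)*y)
      simp only [hkydef] at *
      linarith
    have hlex : (kx n : ℝ) ≤ (n:ℝ)*x := Nat.floor_le (mul_nonneg hnpos.le hx.le)
    have hley : (ky n : ℝ) ≤ (n:ℝ)*y := Nat.floor_le (mul_nonneg hnpos.le (by linarith))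
    have hkxy : kx n ≤ ky n := Nat.floor_le_floor (by nlinarith)
    have hkyn : ky n ≤ n := by
      have : ((n:ℝ)*y) ≤ ((n:ℕ):ℝ) := by nlinarith
      have h' := Nat.floor_le_floor this
      rwa [Nat.floor_natCast] at h'
    have hax : a n ≤ x := by
      rw [hadef, div_le_iff₀ hnpos]
      linarith [hlex]
    have haxl : x - 1/(n:ℝ) ≤ a n := by
      rw [hadef, le_div_iff₀ hnpos]
      have : (x - 1/(n:ℝ)) * n = (n:ℝ)*x - 1 := by field_simp
      rw [this]
      linarith
    have haε : ε < a n := by linarith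
    have hby : b n ≤ y := by
      rw [hbdef, div_le_iff₀ hnpos]
      linarith [hley]
    have hbyl : y - 1/(n:ℝ) ≤ b n := by
      rw [hbdef, le_div_iff₀ hnpos]
      have : (y - 1/(n:ℝ)) * n = (n:ℝ)*y - 1 := by field_simp
      rw [this]
      linarith
    have hab : a n ≤ b n := by
      rw [hadef, hbdef, div_le_div_iff₀ hnpos hnpos]
      have hc : (kx n:ℝ) ≤ (ky n:ℝ) := by exact_mod_cast hkxy
      nlinarith
    exact ⟨haxl, haε, hax, hab, hbyl, hby, hkyn, hkxy⟩
  have hmemab : ∀ᶠ n in atTop, a n ∈ Set.Icc ε ε' ∧ b n ∈ Set.Icc ε ε' ∧ a n ≤ b n := by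
    filter_upwards [hev] with n hn
    obtain ⟨f0, f1, f2, f3, f4, f5, f6, f7⟩ := hfacts n hn.1 hn.2
    exact ⟨⟨f1.le, by linarith⟩, ⟨le_trans f1.le f3, by linarith⟩, f3⟩
  have hlow : Tendsto (fun n : ℕ => x - 1/(n:ℝ)) atTop (𝓝 x) := by
    have := tendsto_const_nhds (x := x) (f := atTop (α := ℕ)) |>.sub
      tendsto_one_div_atTop_nhds_zero_nat
    simpa using this
  have hlowy : Tendsto (fun n : ℕ => y - 1/(n:ℝ)) atTop (𝓝 y) := by
    have := tendsto_const_nhds (x := y) (f := atTop (α := ℕ)) |>.sub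
      tendsto_one_div_atTop_nhds_zero_nat
    simpa using this
  have hta : Tendsto a atTop (𝓝 x) := by
    apply tendsto_of_tendsto_of_tendsto_of_le_of_le' hlow tendsto_const_nhds
    · filter_upwards [hev] with n hn
      exact (hfacts n hn.1 hn.2).1
    · filter_upwards [hev] with n hn
      exact (hfacts n hn.1 hn.2).2.2.1
  have htb : Tendsto b atTop (𝓝 y) := by
    apply tendsto_of_tendsto_of_tendsto_of_le_of_le' hlowy tendsto_const_nhds
    · filter_upwards [hev] with n hn
      exact (hfacts n hn.1 hn.2).2.2.2.2.1
    · filter_upwards [hev] with n hn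
      exact (hfacts n hn.1 hn.2).2.2.2.2.2.1
  -- the primitive of φ
  have hφint2 : ∀ u ∈ Set.Icc ε ε', IntervalIntegrable φ volume ε u := fun u hu => by
    apply ContinuousOn.intervalIntegrable
    apply hφc.mono
    rw [Set.uIcc_of_le hu.1]
    exact Set.Icc_subset_Icc le_rfl hu.2
  set Φ : ℝ → ℝ := fun u => ∫ t in ε..u, φ t with hΦdef
  have hΦc : ContinuousOn Φ (Set.Icc ε ε') := by
    have := intervalIntegral.continuousOn_primitive_interval'
      (hφint2 ε' ⟨hεε'.le, le_rfl⟩) (left_mem_uIcc (a := ε) (b := ε'))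
    rwa [Set.uIcc_of_le hεε'.le] at this
  have hsubdiff : ∀ u ∈ Set.Icc ε ε', ∀ v ∈ Set.Icc ε ε',
      (∫ t in u..v, φ t) = Φ v - Φ u := fun u hu v hv => by
    rw [hΦdef]
    exact (intervalIntegral.integral_interval_sub_left (hφint2 v hv) (hφint2 u hu)).symm
  have hxmem : x ∈ Set.Icc ε ε' := ⟨hεx.le, by linarith⟩
  have hymem : y ∈ Set.Icc ε ε' := ⟨by linarith, hyε'.le⟩
  have hΦax : Tendsto (fun n => Φ (a n)) atTop (𝓝 (Φ x)) := by
    apply Tendsto.comp (hΦc x hxmem)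
    rw [tendsto_nhdsWithin_iff]
    exact ⟨hta, by filter_upwards [hmemab] with n hn; exact hn.1⟩
  have hΦby : Tendsto (fun n => Φ (b n)) atTop (𝓝 (Φ y)) := by
    apply Tendsto.comp (hΦc y hymem)
    rw [tendsto_nhdsWithin_iff]
    exact ⟨htb, by filter_upwards [hmemab] with n hn; exact hn.2.1⟩
  have hIφ : Tendsto (fun n => ∫ t in (a n)..(b n), φ t) atTop (𝓝 (∫ t in x..y, φ t)) := by
    have heq2 : ∀ᶠ n in atTop, Φ (b n) - Φ (a n) = ∫ t in (a n)..(b n), φ t := by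
      filter_upwards [hmemab] with n hn
      exact (hsubdiff (a n) hn.1 (b n) hn.2.1).symm
    have h3 := hΦby.sub hΦax
    rw [show Φ y - Φ x = ∫ t in x..y, φ t from (hsubdiff x hxmem y hymem).symm] at h3
    exact h3.congr' heq2
  have htel : ∀ᶠ n in atTop, IntervalIntegrable (psiFn F G H n) volume (a n) (b n) ∧
      F n (ky n) - F n (kx n) = ∫ t in (a n)..(b n), psiFn F G H n t := by
    filter_upwards [hev] with n hn
    obtain ⟨f0, f1, f2, f3, f4, f5, f6, f7⟩ := hfacts n hn.1 hn.2
    exact aux_telescope F G H hrec (kx n) (ky n) f7 f6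
  have hD : Tendsto (fun n => (∫ t in (a n)..(b n), psiFn F G H n t) -
      ∫ t in (a n)..(b n), φ t) atTop (𝓝 0) := by
    rw [NormedAddCommGroup.tendsto_nhds_zero]
    intro δ hδ
    have hU := (Metric.tendstoUniformlyOn_iff.mp Upsi) (δ/2) (by linarith)
    filter_upwards [hU, hmemab, htel] with n hUn hmem htn
    obtain ⟨hma, hmb, hab⟩ := hmem
    have hφint3 : IntervalIntegrable φ volume (a n) (b n) := by
      apply ContinuousOn.intervalIntegrable
      apply hφc.mono
      rw [Set.uIcc_of_le hab]
      exact Set.Icc_subset_Icc hma.1 hmb.2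
    rw [← intervalIntegral.integral_sub htn.1 hφint3]
    have hbound : ∀ t ∈ Set.uIoc (a n) (b n), ‖psiFn F G H n t - φ t‖ ≤ δ/2 := by
      intro t ht
      rw [Set.uIoc_of_le hab] at ht
      have htmem : t ∈ Set.Icc ε ε' := ⟨le_trans hma.1 ht.1.le, le_trans ht.2 hmb.2⟩
      have hd := hUn t htmem
      rw [Real.dist_eq] at hd
      rw [Real.norm_eq_abs, abs_sub_comm]
      linarith
    have hbig := intervalIntegral.norm_integral_le_of_norm_le_const hbound
    have hlen : |b n - a n| ≤ 1 := by
      rw [abs_of_nonneg (by linarith)]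
      have h1' := hmb.2
      have h2' := hma.1
      linarith
    calc ‖∫ t in (a n)..(b n), (psiFn F G H n t - φ t)‖ ≤ δ/2 * |b n - a n| := hbig
      _ ≤ δ/2 * 1 := by
          apply mul_le_mul_of_nonneg_left hlen (by linarith)
      _ < δ := by linarith
  have hT2 : Tendsto (fun n => ∫ t in (a n)..(b n), psiFn F G H n t) atTop
      (𝓝 (∫ t in x..y, φ t)) := by
    have h4 := hD.add hIφ
    rw [zero_add] at h4
    apply h4.congr
    intro n; ring
  have hT1 : Tendsto (fun n => F n (ky n) - F n (kx n)) atTop (𝓝 (f y - f x)) := by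
    have h1 := hfconv.tendsto_at (show y ∈ Set.Icc (0:ℝ) 1 from ⟨by linarith, hy1.le⟩)
    have h2 := hfconv.tendsto_at (show x ∈ Set.Icc (0:ℝ) 1 from ⟨hx.le, by linarith⟩)
    exact h1.sub h2
  exact tendsto_nhds_unique (hT1.congr' (by filter_upwards [htel] with n hn; exact hn.2)) hT2

theorem stmt_11
    (F G H : ℕ → ℕ → ℝ) (μ : ℝ) (f g h : ℝ → ℝ)
    (hrec : ∀ n : ℕ, ∀ k < n, F n k = G n k + H n k * F n (k + 1))
    (hterm : ∀ n : ℕ, F n n = μ)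
    (hgconv : ∀ ε ε' : ℝ, 0 < ε → ε < ε' → ε' < 1 →
      TendstoUniformlyOn (fun (n : ℕ) (x : ℝ) => (n : ℝ) * G n ⌊(n : ℝ) * x⌋₊) g atTop (Set.Icc ε ε'))
    (hhconv : ∀ ε ε' : ℝ, 0 < ε → ε < ε' → ε' < 1 →
      TendstoUniformlyOn (fun (n : ℕ) (x : ℝ) => (n : ℝ) * (1 - H n ⌊(n : ℝ) * x⌋₊)) h atTop
        (Set.Icc ε ε'))
    (hg : ContinuousOn g (Set.Ioo 0 1)) (hh : ContinuousOn h (Set.Ioo 0 1))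
    (hfconv : TendstoUniformlyOn (fun (n : ℕ) (x : ℝ) => F n ⌊(n : ℝ) * x⌋₊) f atTop (Set.Icc 0 1))
    (hf : ContinuousOn f (Set.Icc 0 1)) :
    f 1 = μ ∧ ∀ x ∈ Set.Ioo (0 : ℝ) 1, HasDerivAt f (f x * h x - g x) x := by
  constructor
  · have h1 : Tendsto (fun n : ℕ => F n ⌊(n:ℝ) * 1⌋₊) atTop (𝓝 (f 1)) :=
      hfconv.tendsto_at (by norm_num)
    have h2 : ∀ n : ℕ, F n ⌊(n:ℝ) * 1⌋₊ = μ := by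
      intro n; rw [mul_one, Nat.floor_natCast, hterm]
    rw [tendsto_congr h2] at h1
    exact tendsto_nhds_unique h1 tendsto_const_nhds
  · intro x hx
    obtain ⟨hx0, hx1⟩ := hx
    have hφcont : ContinuousOn (fun s => h s * f s - g s) (Set.Ioo 0 1) :=
      (hh.mul (hf.mono Set.Ioo_subset_Icc_self)).sub hg
    have hca : ContinuousAt (fun s => h s * f s - g s) x :=
      hφcont.continuousAt (isOpen_Ioo.mem_nhds ⟨hx0, hx1⟩)
    have haxsub : Set.uIcc (x/2) x ⊆ Set.Ioo (0:ℝ) 1 := by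
      rw [Set.uIcc_of_le (by linarith)]
      intro t ht
      exact ⟨by linarith [ht.1], lt_of_le_of_lt ht.2 hx1⟩
    have hii : IntervalIntegrable (fun s => h s * f s - g s) volume (x/2) x :=
      (hφcont.mono haxsub).intervalIntegrable
    have hmeas := hφcont.stronglyMeasurableAtFilter (μ := (volume : MeasureTheory.Measure ℝ)) isOpen_Ioo
    have hd : HasDerivAt (fun u => ∫ s in (x/2)..u, (h s * f s - g s)) (h x * f x - g x) x :=
      intervalIntegral.integral_hasDerivAt_right hii (hmeas x ⟨hx0, hx1⟩) hca
    have hd2 := hd.const_add (f (x/2))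
    have heq : (fun u => f (x/2) + ∫ s in (x/2)..u, (h s * f s - g s)) =ᶠ[𝓝 x] f := by
      filter_upwards [isOpen_Ioo.mem_nhds (show x ∈ Set.Ioo (x/2) 1 from ⟨by linarith, hx1⟩)]
        with t ht
      have hk := aux_key F G H f g h hrec hgconv hhconv hg hh hfconv hf
        (by linarith : 0 < x/2) ht.1 ht.2
      linarith [hk]
    have hfinal := hd2.congr_of_eventuallyEq heq.symm
    rw [mul_comm]
    exact hfinal
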